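/- If σ is a strategy and σ* is its 'best-response-normalization' — σ*(H) = σ(H) if H is a best response for type H₋₁ under σ, and otherwise σ*(H) = σ(H') for some chosen H' ∈ BR(h₀, H₋₁, σ) with H'₋₁ = H₋₁ — then: (i) whenever H' ∈ BR(h₀, h, σ) and σ*(H) = σ(H'), the chain H is in BR(h₀, h, σ*); (ii) σ* is effectively equivalent to σ; and (iii) the payoffs V_d(·, σ*) and V_e(·, σ*) are constant over all chains with the same final element. -/

import Mathlib

/-- A consistent sequence: a nonempty, strictly increasing chain beginning at `h₀`. -/
def Cons {𝓗 : Type} [Preorder 𝓗] (h₀ : 𝓗) (H : List 𝓗) : Prop :=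
  H ≠ [] ∧ H.head? = some h₀ ∧ H.Chain' (· < ·)

/-- Membership in `𝓗(h₀, h)`. -/
def Memb {𝓗 : Type} [Preorder 𝓗] (h₀ h : 𝓗) (H : List 𝓗) : Prop :=
  Cons h₀ H ∧ H.getLastD h₀ ≤ h

/-- Best response for type `h` under expert payoff `Ve`. -/
def BRp {𝓗 : Type} [Preorder 𝓗] (h₀ : 𝓗) (Ve : List 𝓗 → ℝ) (h : 𝓗) (H : List 𝓗) : Prop :=
  Memb h₀ h H ∧ ∀ H', Memb h₀ h H' → Ve H' ≤ Ve H

/-- Lemma A.3, parts (i), (ii), (iv): the best-response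
normalization `σ*` of `σ` — encoded by a selection `sel` of chains, with
`σ* H = σ (sel H)` and hence payoffs `Vd ∘ sel`, `Ve ∘ sel` — satisfies:
(i) if `sel H` is a best response for type `h` (and `H` is feasible for `h`),
then `H` is a best response for `h` under `σ*`; (ii) `σ*` is effectively
equivalent to `σ`; (iii) the payoffs of `σ*` are constant over chains with the
same final element. -/
lemma exists_BR {𝓗 : Type} [Fintype 𝓗] [PartialOrder 𝓗] (h₀ : 𝓗) (hmin : ∀ h : 𝓗, h₀ ≤ h)
    (Ve : List 𝓗 → ℝ) (h : 𝓗) : ∃ H, BRp h₀ Ve h H := by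
  have hfin : {H : List 𝓗 | Memb h₀ h H}.Finite := by
    apply (List.finite_length_le 𝓗 (Fintype.card 𝓗)).subset
    rintro H ⟨⟨-, -, hc⟩, -⟩
    have : H.Nodup := ((List.isChain_iff_pairwise).1 hc).nodup
    exact this.length_le_card
  have hne : ([h₀] : List 𝓗) ∈ {H : List 𝓗 | Memb h₀ h H} := by
    refine ⟨⟨by simp, by simp, by exact List.isChain_singleton _⟩, by simpa using hmin h⟩
  obtain ⟨H, hH, hmax⟩ := hfin.toFinset.exists_max_image Ve ⟨_, hfin.mem_toFinset.2 hne⟩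
  exact ⟨H, hfin.mem_toFinset.1 hH, fun H' hH' => hmax H' (hfin.mem_toFinset.2 hH')⟩

lemma BR_self {𝓗 : Type} [Preorder 𝓗] {h₀ h : 𝓗} {Ve : List 𝓗 → ℝ} {H : List 𝓗}
    (hBR : BRp h₀ Ve h H) : BRp h₀ Ve (H.getLastD h₀) H :=
  ⟨⟨hBR.1.1, le_refl _⟩, fun H' hH' => hBR.2 H' ⟨hH'.1, hH'.2.trans hBR.1.2⟩⟩

theorem best_response_normalization
    {𝓗 : Type} [Fintype 𝓗] [PartialOrder 𝓗] (h₀ : 𝓗) (hmin : ∀ h : 𝓗, h₀ ≤ h)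
    (Vd Ve : List 𝓗 → ℝ) (sel : List 𝓗 → List 𝓗)
    -- σ* coincides with σ on best responses …
    (hsel1 : ∀ H : List 𝓗, Cons h₀ H → BRp h₀ Ve (H.getLastD h₀) H → sel H = H)
    -- … and otherwise selects a best response with the same final element
    (hsel2 : ∀ H : List 𝓗, Cons h₀ H →
      BRp h₀ Ve (H.getLastD h₀) (sel H) ∧ (sel H).getLastD h₀ = H.getLastD h₀)
    -- under robustness, Vd is constant across best responses of a common type
    -- (consequence of strong myopic optimality, Lemma A.2)
    (hVdBR : ∀ (h : 𝓗) (H H' : List 𝓗),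
      BRp h₀ Ve h H → BRp h₀ Ve h H' → Vd H = Vd H') :
    -- (i)
    (∀ (h : 𝓗) (H : List 𝓗), Memb h₀ h H → BRp h₀ Ve h (sel H) →
      BRp h₀ (Ve ∘ sel) h H) ∧
    -- (ii) effective equivalence
    (∀ h : 𝓗,
      {t : ℝ × ℝ × 𝓗 | ∃ H, BRp h₀ Ve h H ∧ t = (Vd H, Ve H, H.getLastD h₀)} =
      {t : ℝ × ℝ × 𝓗 | ∃ H, BRp h₀ (Ve ∘ sel) h H ∧
        t = (Vd (sel H), Ve (sel H), H.getLastD h₀)}) ∧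
    -- (iii) payoffs constant over chains with the same final element
    (∀ H H' : List 𝓗, Cons h₀ H → Cons h₀ H' → H.getLastD h₀ = H'.getLastD h₀ →
      Vd (sel H) = Vd (sel H') ∧ Ve (sel H) = Ve (sel H')) := by
  -- `sel H` is feasible for `h` whenever `H` is
  have hselMemb : ∀ (h : 𝓗) (H : List 𝓗), Memb h₀ h H → Memb h₀ h (sel H) := by
    intro h H hM
    obtain ⟨hBR, hlast⟩ := hsel2 H hM.1
    exact ⟨hBR.1.1, by rw [hlast]; exact hM.2⟩
  -- part (i)
  have part1 : ∀ (h : 𝓗) (H : List 𝓗), Memb h₀ h H → BRp h₀ Ve h (sel H) →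
      BRp h₀ (Ve ∘ sel) h H := by
    intro h H hM hBR
    exact ⟨hM, fun H' hM' => hBR.2 (sel H') (hselMemb h H' hM')⟩
  -- `sel H` is a best response for `h` whenever `H` is a σ*-best response for `h`
  have key : ∀ (h : 𝓗) (H : List 𝓗), BRp h₀ (Ve ∘ sel) h H → BRp h₀ Ve h (sel H) := by
    intro h H hBR
    obtain ⟨H₂, hBR₂⟩ := exists_BR h₀ hmin Ve h
    have hsel₂ : sel H₂ = H₂ := hsel1 H₂ hBR₂.1.1 (BR_self hBR₂)
    have h1 : Ve H₂ ≤ Ve (sel H) := by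
      have := hBR.2 H₂ hBR₂.1
      simpa [Function.comp, hsel₂] using this
    exact ⟨hselMemb h H hBR.1, fun H' hM' => (hBR₂.2 H' hM').trans h1⟩
  refine ⟨part1, fun h => ?_, fun H H' hC hC' hlast => ?_⟩
  · ext t
    constructor
    · rintro ⟨H, hBR, rfl⟩
      have hself : sel H = H := hsel1 H hBR.1.1 (BR_self hBR)
      exact ⟨H, part1 h H hBR.1 (by rwa [hself]), by rw [hself]⟩
    · rintro ⟨H, hBR, rfl⟩
      obtain ⟨-, hlast⟩ := hsel2 H hBR.1.1
      exact ⟨sel H, key h H hBR, by rw [hlast]⟩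
  · obtain ⟨hBR, hl⟩ := hsel2 H hC
    obtain ⟨hBR', hl'⟩ := hsel2 H' hC'
    rw [hlast] at hBR
    exact ⟨hVdBR _ _ _ hBR hBR',
      le_antisymm (hBR'.2 _ hBR.1) (hBR.2 _ hBR'.1)⟩
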